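/- Let S be a topological space and Ψ : S ≃ S a homeomorphism. Then the natural projection p : S × ℝ → (S × ℝ)/χ from S × ℝ onto the orbit space of the ℤ-action n • (s, r) = (Ψ^n(s), r + n) is a covering map. -/

import Mathlib

/-- The orbit relation on `S × ℝ` of the ℤ-action `n • (s, r) = (Ψ^n(s), r + n)`
generated by `χ(s, r) = (Ψ(s), r + 1)`. -/
def mappingTorusRel {S : Type*} (Ψ : S ≃ S) (p q : S × ℝ) : Prop :=
  ∃ n : ℤ, ((Ψ ^ n) p.1, p.2 + n) = q

open Set Topology

set_option linter.unusedSectionVars false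
set_option linter.unusedTactic false

namespace MTAux

variable {S : Type*} [TopologicalSpace S] (Ψ : S ≃ₜ S)

/-- The `n`-th power of the generating homeomorphism, as a plain map. -/
def T (n : ℤ) (x : S × ℝ) : S × ℝ := ((Ψ.toEquiv ^ n) x.1, x.2 + n)

lemma cont_pow (n : ℤ) : Continuous fun s => (Ψ.toEquiv ^ n) s := by
  induction n using Int.induction_on with
  | zero => simpa using continuous_id'
  | succ k ih =>
    have h : ∀ s, (Ψ.toEquiv ^ ((k : ℤ) + 1)) s = (Ψ.toEquiv ^ (k : ℤ)) (Ψ s) := by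
      intro s; rw [zpow_add_one]; rfl
    simpa only [h] using ih.comp' Ψ.continuous
  | pred k ih =>
    have h : ∀ s, (Ψ.toEquiv ^ (-(k : ℤ) - 1)) s = (Ψ.toEquiv ^ (-(k : ℤ))) (Ψ.symm s) := by
      intro s; rw [zpow_sub_one]; rfl
    simpa only [h] using ih.comp' Ψ.symm.continuous

lemma cont_T (n : ℤ) : Continuous (T Ψ n) :=
  ((cont_pow Ψ n).comp continuous_fst).prodMk (continuous_snd.add continuous_const)

lemma T_add (m n : ℤ) (x : S × ℝ) : T Ψ m (T Ψ n x) = T Ψ (m + n) x := by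
  unfold T
  refine Prod.ext ?_ ?_
  · show (Ψ.toEquiv ^ m) ((Ψ.toEquiv ^ n) x.1) = (Ψ.toEquiv ^ (m + n)) x.1
    rw [zpow_add]; rfl
  · show x.2 + (n : ℝ) + (m : ℝ) = x.2 + ((m + n : ℤ) : ℝ)
    push_cast; ring

lemma T_zero (x : S × ℝ) : T Ψ 0 x = x := by
  unfold T; simp

lemma rel_iff (x y : S × ℝ) : mappingTorusRel Ψ.toEquiv x y ↔ ∃ n, T Ψ n x = y := Iff.rfl

lemma rel_equiv : Equivalence (mappingTorusRel Ψ.toEquiv) := by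
  constructor
  · exact fun x => ⟨0, T_zero Ψ x⟩
  · rintro x y ⟨n, hn⟩
    refine ⟨-n, ?_⟩
    show T Ψ (-n) y = x
    have hn' : T Ψ n x = y := hn
    rw [← hn', T_add, neg_add_cancel, T_zero]
  · rintro x y z ⟨n, hn⟩ ⟨m, hm⟩
    refine ⟨m + n, ?_⟩
    show T Ψ (m + n) x = z
    have hn' : T Ψ n x = y := hn
    have hm' : T Ψ m y = z := hm
    rw [← T_add, hn', hm']

lemma mk_eq_mk {x y : S × ℝ} :
    Quot.mk (mappingTorusRel Ψ.toEquiv) x = Quot.mk (mappingTorusRel Ψ.toEquiv) y ↔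
      ∃ n, T Ψ n x = y := by
  rw [Quot.eq, (rel_equiv Ψ).eqvGen_iff]
  exact Iff.rfl

lemma mk_T (n : ℤ) (x : S × ℝ) :
    Quot.mk (mappingTorusRel Ψ.toEquiv) (T Ψ n x) = Quot.mk (mappingTorusRel Ψ.toEquiv) x :=
  (Quot.sound ⟨n, rfl⟩).symm

lemma isOpenMap_mk : IsOpenMap (Quot.mk (mappingTorusRel Ψ.toEquiv)) := by
  intro U hU
  have key : Quot.mk (mappingTorusRel Ψ.toEquiv) ⁻¹' (Quot.mk _ '' U) = ⋃ n : ℤ, T Ψ n ⁻¹' U := by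
    ext x
    simp only [Set.mem_preimage, Set.mem_image, Set.mem_iUnion]
    constructor
    · rintro ⟨u, hu, hux⟩
      obtain ⟨n, hn⟩ := (mk_eq_mk Ψ).mp hux.symm
      exact ⟨n, by rwa [hn]⟩
    · rintro ⟨n, hn⟩
      exact ⟨T Ψ n x, hn, mk_T Ψ n x⟩
  rw [isOpen_coinduced (f := Quot.mk (mappingTorusRel Ψ.toEquiv))]
  rw [key]
  exact isOpen_iUnion fun n => (cont_T Ψ n).isOpen_preimage U hU

end MTAux

namespace MTAux

variable {S : Type*} [TopologicalSpace S] (Ψ : S ≃ₜ S)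

/-- The set of sheet-0 representatives around height `c`. -/
def V (c : ℝ) : Set (S × ℝ) := Set.univ ×ˢ Set.Ioo (c - 2⁻¹) (c + 2⁻¹)

lemma isOpen_V (c : ℝ) : IsOpen (V (S := S) c) := isOpen_univ.prod isOpen_Ioo

lemma mem_V {c : ℝ} {x : S × ℝ} : x ∈ V c ↔ x.2 ∈ Set.Ioo (c - 2⁻¹) (c + 2⁻¹) := by
  simp [V]

/-- The local section of the quotient map, picking the orbit representative
in the sheet around height `c`. -/
noncomputable def sec (c : ℝ) (y : Quot (mappingTorusRel Ψ.toEquiv)) : S × ℝ :=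
  T Ψ (-⌊(Quot.out y).2 - c + 2⁻¹⌋) (Quot.out y)

lemma snd_T (n : ℤ) (x : S × ℝ) : (T Ψ n x).2 = x.2 + n := rfl

lemma sec_eq {c : ℝ} {v : S × ℝ} (hv : v ∈ V c) :
    sec Ψ c (Quot.mk (mappingTorusRel Ψ.toEquiv) v) = v := by
  set w := Quot.out (Quot.mk (mappingTorusRel Ψ.toEquiv) v) with hw
  obtain ⟨n, hn⟩ := (mk_eq_mk Ψ).mp (Quot.out_eq (Quot.mk (mappingTorusRel Ψ.toEquiv) v))
  have hsnd : w.2 + (n : ℝ) = v.2 := by rw [← hn]; rfl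
  rw [mem_V] at hv
  have hfloor : ⌊w.2 - c + 2⁻¹⌋ = -n := by
    rw [Int.floor_eq_iff]
    constructor
    · push_cast
      have := hv.1
      linarith
    · push_cast
      have := hv.2
      linarith
  rw [sec, ← hw, hfloor, neg_neg, hn]

lemma sec_spec {c : ℝ} {y : Quot (mappingTorusRel Ψ.toEquiv)}
    (hy : y ∈ Quot.mk (mappingTorusRel Ψ.toEquiv) '' V c) :
    sec Ψ c y ∈ V c ∧ Quot.mk (mappingTorusRel Ψ.toEquiv) (sec Ψ c y) = y := by
  obtain ⟨v, hv, rfl⟩ := hy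
  rw [sec_eq Ψ hv]
  exact ⟨hv, rfl⟩

lemma continuousOn_sec (c : ℝ) :
    ContinuousOn (sec Ψ c) (Quot.mk (mappingTorusRel Ψ.toEquiv) '' V c) := by
  rw [continuousOn_iff']
  intro t ht
  refine ⟨Quot.mk (mappingTorusRel Ψ.toEquiv) '' (t ∩ V c), isOpenMap_mk Ψ _ (ht.inter (isOpen_V c)), ?_⟩
  ext y
  simp only [Set.mem_inter_iff, Set.mem_preimage]
  constructor
  · rintro ⟨hyt, hyB⟩
    obtain ⟨hmem, hmk⟩ := sec_spec Ψ hyB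
    exact ⟨⟨sec Ψ c y, ⟨hyt, hmem⟩, hmk⟩, hyB⟩
  · rintro ⟨⟨v, ⟨hvt, hvV⟩, rfl⟩, hyB⟩
    rw [sec_eq Ψ hvV]
    exact ⟨hvt, hyB⟩

lemma floor_contAt {t₀ : ℝ} (h : (⌊t₀⌋ : ℝ) < t₀) : ContinuousAt (fun t : ℝ => ⌊t⌋) t₀ := by
  have hmem : Set.Ioo ((⌊t₀⌋ : ℝ)) ((⌊t₀⌋ : ℝ) + 1) ∈ 𝓝 t₀ :=
    isOpen_Ioo.mem_nhds ⟨h, Int.lt_floor_add_one t₀⟩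
  have heq : (fun t : ℝ => ⌊t⌋) =ᶠ[𝓝 t₀] fun _ => ⌊t₀⌋ := by
    filter_upwards [hmem] with t ht
    exact Int.floor_eq_iff.mpr ⟨le_of_lt ht.1, ht.2⟩
  exact heq.continuousAt

lemma cont_uncurry : Continuous fun w : (S × ℝ) × ℤ => T Ψ w.2 w.1 := by
  rw [continuous_iff_continuousAt]
  rintro ⟨x, n⟩
  have hmem : (Set.univ ×ˢ {n} : Set ((S × ℝ) × ℤ)) ∈ 𝓝 (x, n) :=
    (isOpen_univ.prod (isOpen_discrete _)).mem_nhds (by simp)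
  refine ContinuousAt.congr (((cont_T Ψ n).comp continuous_fst).continuousAt) ?_
  filter_upwards [hmem] with w hw
  have h2 : w.2 = n := by simpa using hw.2
  show T Ψ n w.1 = T Ψ w.2 w.1
  rw [h2]

end MTAux

namespace MTAux

variable {S : Type*} [TopologicalSpace S] (Ψ : S ≃ₜ S)

lemma source_key {c : ℝ} {x : S × ℝ}
    (hx : Quot.mk (mappingTorusRel Ψ.toEquiv) x ∈ Quot.mk (mappingTorusRel Ψ.toEquiv) '' V c) :
    T Ψ (⌊x.2 - c + 2⁻¹⌋) (sec Ψ c (Quot.mk (mappingTorusRel Ψ.toEquiv) x)) = x ∧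
      (⌊x.2 - c + 2⁻¹⌋ : ℝ) < x.2 - c + 2⁻¹ := by
  obtain ⟨hV, hmk⟩ := sec_spec Ψ hx
  obtain ⟨k, hk⟩ := (mk_eq_mk Ψ).mp hmk
  rw [mem_V] at hV
  have hsnd : (sec Ψ c (Quot.mk (mappingTorusRel Ψ.toEquiv) x)).2 + (k : ℝ) = x.2 :=
    congrArg Prod.snd hk
  have h1 := hV.1
  have h2 := hV.2
  have hfl : ⌊x.2 - c + 2⁻¹⌋ = k := by
    rw [Int.floor_eq_iff]
    constructor
    · push_cast; linarith
    · push_cast; linarith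
  refine ⟨?_, ?_⟩
  · rw [hfl]; exact hk
  · rw [hfl]; linarith

/-- The local trivialization of the mapping-torus quotient map around height `c`. -/
noncomputable def triv (c : ℝ) : Bundle.Trivialization ℤ (Quot.mk (mappingTorusRel Ψ.toEquiv)) where
  toFun x := (Quot.mk (mappingTorusRel Ψ.toEquiv) x, ⌊x.2 - c + 2⁻¹⌋)
  invFun q := T Ψ q.2 (sec Ψ c q.1)
  source := Quot.mk (mappingTorusRel Ψ.toEquiv) ⁻¹' (Quot.mk (mappingTorusRel Ψ.toEquiv) '' V c)
  target := (Quot.mk (mappingTorusRel Ψ.toEquiv) '' V c) ×ˢ Set.univ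
  map_source' x hx := ⟨hx, Set.mem_univ _⟩
  map_target' q hq := by
    have h : Quot.mk (mappingTorusRel Ψ.toEquiv) (T Ψ q.2 (sec Ψ c q.1)) ∈
        Quot.mk (mappingTorusRel Ψ.toEquiv) '' V c := by
      rw [mk_T Ψ, (sec_spec Ψ hq.1).2]; exact hq.1
    exact h
  left_inv' x hx := (source_key Ψ hx).1
  right_inv' q hq := by
    obtain ⟨hV, hmk⟩ := sec_spec Ψ hq.1
    rw [mem_V] at hV
    have hsnd : (T Ψ q.2 (sec Ψ c q.1)).2 = (sec Ψ c q.1).2 + (q.2 : ℝ) := rfl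
    refine Prod.ext ?_ ?_
    · show Quot.mk _ (T Ψ q.2 (sec Ψ c q.1)) = q.1
      rw [mk_T Ψ, hmk]
    · show ⌊(T Ψ q.2 (sec Ψ c q.1)).2 - c + 2⁻¹⌋ = q.2
      rw [hsnd, Int.floor_eq_iff]
      have h1 := hV.1
      have h2 := hV.2
      constructor
      · push_cast; linarith
      · push_cast; linarith
  open_source := (isOpenMap_mk Ψ _ (isOpen_V c)).preimage (continuous_quot_mk)
  open_target := (isOpenMap_mk Ψ _ (isOpen_V c)).prod isOpen_univ
  continuousOn_toFun := by
    intro x hx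
    apply ContinuousAt.continuousWithinAt
    refine ContinuousAt.prodMk (continuous_quot_mk.continuousAt) ?_
    have hkey := (source_key Ψ hx).2
    have hg : ContinuousAt (fun y : S × ℝ => y.2 - c + 2⁻¹) x :=
      ((continuous_snd.sub continuous_const).add continuous_const).continuousAt
    exact ContinuousAt.comp (floor_contAt hkey) hg
  continuousOn_invFun := by
    have h1 : ContinuousOn (fun q : Quot (mappingTorusRel Ψ.toEquiv) × ℤ => (sec Ψ c q.1, q.2))
        ((Quot.mk (mappingTorusRel Ψ.toEquiv) '' V c) ×ˢ Set.univ) :=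
      ContinuousOn.prodMk
        ((continuousOn_sec Ψ c).comp continuous_fst.continuousOn fun q hq => hq.1)
        continuous_snd.continuousOn
    exact (cont_uncurry Ψ).comp_continuousOn h1
  baseSet := Quot.mk (mappingTorusRel Ψ.toEquiv) '' V c
  open_baseSet := isOpenMap_mk Ψ _ (isOpen_V c)
  source_eq := rfl
  target_eq := rfl
  proj_toFun x _ := rfl

end MTAux


/-- For a homeomorphism `Ψ : S ≃ₜ S`, the natural projection from `S × ℝ` onto the orbit
space of the ℤ-action `n • (s, r) = (Ψ^n(s), r + n)` (the mapping torus of `Ψ`) is a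
covering map. -/
theorem mapping_torus_projection_isCoveringMap {S : Type*} [TopologicalSpace S] (Ψ : S ≃ₜ S) :
    IsCoveringMap (Quot.mk (mappingTorusRel Ψ.toEquiv)) := by
  intro x
  refine IsEvenlyCovered.to_isEvenlyCovered_preimage
    (IsEvenlyCovered.of_trivialization (t := MTAux.triv Ψ (Quot.out x).2) ?_)
  refine ⟨Quot.out x, ?_, Quot.out_eq x⟩
  rw [MTAux.mem_V]
  constructor
  · norm_num
  · norm_num
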